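/- arXiv:1812.07843 — 4 statements merged into one kernel-verified Lean document; each statement's English description precedes it below -/
import Mathlib

section
/- Let Ω be a measure space with 0 < μ(Ω) < ∞ and let f be a measurable function lying in L^p(Ω) for every p ∈ [1,∞) with ‖f‖_{1,∞)} = sup_{1≤p<∞} p^{-1} ((1/μ(Ω)) ∫_Ω |f|^p dμ)^{1/p} < ∞. Then there exists λ > 0 such that ∫_Ω e^{λ|f(x)|} dμ(x) < ∞; that is, L^{1,∞)}(Ω) ⊆ EXP(Ω). -/
open MeasureTheory ENNReal

/-- The grand exponential-class norm `‖f‖_{θ,∞)}`: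
`sup_{1 ≤ p < ∞} p^{-θ} ((1/μ(Ω)) ∫_Ω |f|^p dμ)^{1/p}`, valued in `ℝ≥0∞`. -/
noncomputable def grandNorm {α : Type*} [MeasurableSpace α] (μ : Measure α) (θ : ℝ)
    (f : α → ℝ) : ℝ≥0∞ :=
  ⨆ (p : ℝ) (_ : 1 ≤ p),
    ENNReal.ofReal p ^ (-θ) * ((μ Set.univ)⁻¹ * ∫⁻ x, (‖f x‖₊ : ℝ≥0∞) ^ p ∂μ) ^ (1 / p)

lemma real_exp_eq_tsum (x : ℝ) : Real.exp x = ∑' n : ℕ, x ^ n / n.factorial := by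
  rw [Real.exp_eq_exp_ℝ, NormedSpace.exp_eq_tsum_div]

lemma pow_div_factorial_le_exp (x : ℝ) (hx : 0 ≤ x) (n : ℕ) :
    x ^ n / n.factorial ≤ Real.exp x := by
  rw [real_exp_eq_tsum]
  exact Summable.le_tsum (Real.summable_pow_div_factorial x) n fun m _ =>
    div_nonneg (pow_nonneg hx m) (Nat.cast_nonneg _)

lemma moment_bound {α : Type*} [MeasurableSpace α] (μ : Measure α)
    (hμ0 : μ Set.univ ≠ 0) (hμtop : μ Set.univ ≠ ⊤) (f : α → ℝ) (n : ℕ) (hn : 1 ≤ n) :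
    ∫⁻ x, (‖f x‖₊ : ℝ≥0∞) ^ n ∂μ ≤
      μ Set.univ * (ENNReal.ofReal n * grandNorm μ 1 f) ^ n := by
  set M := grandNorm μ 1 f with hM
  set a : ℝ≥0∞ := ENNReal.ofReal n with ha
  have hn1 : (1 : ℝ) ≤ (n : ℝ) := by exact_mod_cast hn
  have ha0 : a ≠ 0 := by
    simp [ha, ENNReal.ofReal_eq_zero]; linarith
  have hatop : a ≠ ⊤ := ENNReal.ofReal_ne_top
  set I : ℝ≥0∞ := ∫⁻ x, (‖f x‖₊ : ℝ≥0∞) ^ ((n : ℝ)) ∂μ with hI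
  have key : a ^ (-(1:ℝ)) * ((μ Set.univ)⁻¹ * I) ^ (1 / (n : ℝ)) ≤ M := by
    rw [hM, grandNorm]
    exact le_iSup₂ (f := fun (p : ℝ) (_ : 1 ≤ p) =>
      ENNReal.ofReal p ^ (-(1:ℝ)) * ((μ Set.univ)⁻¹ * ∫⁻ x, (‖f x‖₊ : ℝ≥0∞) ^ p ∂μ) ^ (1 / p))
      (n : ℝ) hn1
  rw [ENNReal.rpow_neg_one] at key
  have step1 : ((μ Set.univ)⁻¹ * I) ^ (1 / (n : ℝ)) ≤ a * M := by
    calc ((μ Set.univ)⁻¹ * I) ^ (1 / (n : ℝ))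
        = a * (a⁻¹ * ((μ Set.univ)⁻¹ * I) ^ (1 / (n : ℝ))) := by
          rw [← mul_assoc, ENNReal.mul_inv_cancel ha0 hatop, one_mul]
      _ ≤ a * M := mul_le_mul_right key _
  have step2 : (μ Set.univ)⁻¹ * I ≤ (a * M) ^ (n : ℝ) := by
    have := ENNReal.rpow_le_rpow step1 (Nat.cast_nonneg n : (0:ℝ) ≤ n)
    rwa [← ENNReal.rpow_mul, one_div, inv_mul_cancel₀ (by positivity : (n:ℝ) ≠ 0),
      ENNReal.rpow_one] at this
  have step3 : I ≤ μ Set.univ * (a * M) ^ (n : ℝ) := by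
    calc I = μ Set.univ * ((μ Set.univ)⁻¹ * I) := by
          rw [← mul_assoc, ENNReal.mul_inv_cancel hμ0 hμtop, one_mul]
      _ ≤ _ := mul_le_mul_right step2 _
  have hIeq : ∫⁻ x, (‖f x‖₊ : ℝ≥0∞) ^ n ∂μ = I := by
    rw [hI]; exact lintegral_congr fun x => (ENNReal.rpow_natCast _ n).symm
  rw [hIeq, ← ENNReal.rpow_natCast (a * M) n]
  exact step3

lemma real_term_bound (C : ℝ) (hC : 0 < C) (n : ℕ) :
    ((2 * Real.exp 1 * C)⁻¹) ^ n / n.factorial * ((n : ℝ) * C) ^ n ≤ (2⁻¹ : ℝ) ^ n := by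
  set lam : ℝ := (2 * Real.exp 1 * C)⁻¹ with hlam
  have he : (0:ℝ) < Real.exp 1 := Real.exp_pos 1
  have hlam0 : 0 < lam := by positivity
  have h1 : ((n:ℝ)) ^ n / n.factorial ≤ Real.exp 1 ^ n := by
    calc ((n:ℝ)) ^ n / n.factorial ≤ Real.exp n :=
          pow_div_factorial_le_exp _ (Nat.cast_nonneg n) n
      _ = Real.exp 1 ^ n := by rw [← Real.exp_nat_mul, mul_one]
  have key : lam ^ n / n.factorial * ((n : ℝ) * C) ^ n
      = (lam * C) ^ n * (((n:ℝ)) ^ n / n.factorial) := by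
    rw [mul_pow, mul_pow]; ring
  rw [key]
  calc (lam * C) ^ n * (((n:ℝ)) ^ n / n.factorial)
      ≤ (lam * C) ^ n * Real.exp 1 ^ n :=
        mul_le_mul_of_nonneg_left h1 (by positivity)
    _ = (lam * C * Real.exp 1) ^ n := by rw [← mul_pow]
    _ = (2⁻¹ : ℝ) ^ n := by
        congr 1
        field_simp [hlam]
        rw [hlam]; field_simp


/-- `L^{1,∞)}(Ω) ⊆ EXP(Ω)`. -/
theorem exp_integrable_of_grandNorm_one_lt_top {α : Type*} [MeasurableSpace α] (μ : Measure α)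
    (hμ0 : μ Set.univ ≠ 0) (hμtop : μ Set.univ ≠ ⊤)
    (f : α → ℝ) (hmeas : Measurable f)
    (hf : ∀ p : ℝ, 1 ≤ p → MemLp f (ENNReal.ofReal p) μ)
    (hnorm : grandNorm μ 1 f < ⊤) :
    ∃ lam : ℝ, 0 < lam ∧ ∫⁻ x, ENNReal.ofReal (Real.exp (lam * |f x|)) ∂μ < ⊤ := by
  set M := grandNorm μ 1 f with hMdef
  set C : ℝ := M.toReal + 1 with hCdef
  have hC : 0 < C := by
    have : 0 ≤ M.toReal := ENNReal.toReal_nonneg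
    linarith
  have hMC : M ≤ ENNReal.ofReal C := by
    conv_lhs => rw [← ENNReal.ofReal_toReal hnorm.ne]
    exact ENNReal.ofReal_le_ofReal (by linarith)
  have he : (0:ℝ) < Real.exp 1 := Real.exp_pos 1
  set lam : ℝ := (2 * Real.exp 1 * C)⁻¹ with hlamdef
  have hlam : 0 < lam := by positivity
  refine ⟨lam, hlam, ?_⟩
  have hexp : ∀ x, ENNReal.ofReal (Real.exp (lam * |f x|)) =
      ∑' n : ℕ, ENNReal.ofReal ((lam * |f x|) ^ n / n.factorial) := by
    intro x
    rw [real_exp_eq_tsum]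
    exact ENNReal.ofReal_tsum_of_nonneg
      (fun n => div_nonneg (pow_nonneg (by positivity) n) (Nat.cast_nonneg _))
      (Real.summable_pow_div_factorial _)
  have hterm : ∀ n : ℕ, ∫⁻ x, ENNReal.ofReal ((lam * |f x|) ^ n / n.factorial) ∂μ
      = ENNReal.ofReal (lam ^ n / n.factorial) * ∫⁻ x, (‖f x‖₊ : ℝ≥0∞) ^ n ∂μ := by
    intro n
    have hpt : ∀ x, ENNReal.ofReal ((lam * |f x|) ^ n / n.factorial)
        = ENNReal.ofReal (lam ^ n / n.factorial) * (‖f x‖₊ : ℝ≥0∞) ^ n := by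
      intro x
      have h1 : (lam * |f x|) ^ n / n.factorial = lam ^ n / n.factorial * |f x| ^ n := by
        rw [mul_pow]; ring
      rw [h1, ENNReal.ofReal_mul (by positivity), ENNReal.ofReal_pow (abs_nonneg _)]
      rw [← Real.enorm_eq_ofReal_abs]; rfl
    simp_rw [hpt]
    exact lintegral_const_mul _ (hmeas.enorm.pow_const n)
  have hbound : ∀ n : ℕ, ENNReal.ofReal (lam ^ n / n.factorial) * ∫⁻ x, (‖f x‖₊ : ℝ≥0∞) ^ n ∂μ
      ≤ μ Set.univ * ENNReal.ofReal ((2⁻¹ : ℝ) ^ n) := by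
    intro n
    rcases Nat.eq_zero_or_pos n with rfl | hn
    · simp [lintegral_one]
    · calc ENNReal.ofReal (lam ^ n / n.factorial) * ∫⁻ x, (‖f x‖₊ : ℝ≥0∞) ^ n ∂μ
          ≤ ENNReal.ofReal (lam ^ n / n.factorial) *
              (μ Set.univ * (ENNReal.ofReal n * M) ^ n) :=
            mul_le_mul_right (moment_bound μ hμ0 hμtop f n hn) _
        _ ≤ ENNReal.ofReal (lam ^ n / n.factorial) *
              (μ Set.univ * (ENNReal.ofReal n * ENNReal.ofReal C) ^ n) := by
            gcongr
        _ = μ Set.univ * ENNReal.ofReal (lam ^ n / n.factorial * ((n : ℝ) * C) ^ n) := by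
            rw [← ENNReal.ofReal_mul (Nat.cast_nonneg n),
              ← ENNReal.ofReal_pow (by positivity), mul_left_comm,
              ← ENNReal.ofReal_mul (by positivity)]
        _ ≤ μ Set.univ * ENNReal.ofReal ((2⁻¹ : ℝ) ^ n) :=
            mul_le_mul_right (ENNReal.ofReal_le_ofReal (real_term_bound C hC n)) _
  calc ∫⁻ x, ENNReal.ofReal (Real.exp (lam * |f x|)) ∂μ
      = ∑' n : ℕ, ∫⁻ x, ENNReal.ofReal ((lam * |f x|) ^ n / n.factorial) ∂μ := by
        simp_rw [hexp]
        exact lintegral_tsum fun n =>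
          (((hmeas.abs.const_mul lam).pow_const n).div_const _).ennreal_ofReal.aemeasurable
    _ ≤ ∑' n : ℕ, μ Set.univ * ENNReal.ofReal ((2⁻¹ : ℝ) ^ n) := by
        refine ENNReal.tsum_le_tsum fun n => ?_
        rw [hterm n]; exact hbound n
    _ = μ Set.univ * ∑' n : ℕ, ENNReal.ofReal ((2⁻¹ : ℝ) ^ n) := ENNReal.tsum_mul_left
    _ < ⊤ := by
        have hs : Summable fun n : ℕ => (2⁻¹ : ℝ) ^ n := by
          simpa using summable_geometric_two
        rw [← ENNReal.ofReal_tsum_of_nonneg (fun n => by positivity) hs]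
        exact ENNReal.mul_lt_top hμtop.lt_top ENNReal.ofReal_lt_top
end

section
/- Let 0 < θ ≤ 1 and consider the function f(x) = (−ln x)^θ on the interval Ω = (0,1) with Lebesgue measure. Then f ∉ L^∞(0,1) (f is not essentially bounded), yet f ∈ L^p(0,1) for every p ∈ [1,∞) and sup_{1≤p<∞} p^{-θ} (∫_0^1 (−ln x)^{pθ} dx)^{1/p} ≤ 2, so that f ∈ L^{θ,∞)}(0,1). Consequently, for every θ > 0, L^∞(Ω) is a proper subspace of L^{θ,∞)}(Ω). -/
open MeasureTheory ENNReal

lemma ptwise (s t : ℝ) (hs : 0 < s) (ht : 0 < t) :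
    t ^ s ≤ s ^ s * Real.exp (t / 2) := by
  have h2s : (0:ℝ) < 2 * s := by linarith
  have hlog : Real.log (t / (2 * s)) ≤ t / (2 * s) - 1 :=
    Real.log_le_sub_one_of_pos (by positivity)
  rw [Real.log_div ht.ne' h2s.ne'] at hlog
  have hlog2 : Real.log 2 ≤ 1 := by
    rw [← Real.log_exp 1]
    exact Real.log_le_log (by norm_num) (by linarith [Real.add_one_le_exp 1])
  have key : s * Real.log t ≤ s * Real.log s + t / 2 := by
    have h1 : Real.log t ≤ Real.log 2 + Real.log s + t / (2 * s) - 1 := by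
      rw [Real.log_mul (by norm_num) hs.ne'] at hlog; linarith
    have h2 : s * Real.log t ≤ s * (Real.log 2 + Real.log s + t / (2 * s) - 1) :=
      mul_le_mul_of_nonneg_left h1 hs.le
    have h3 : s * (t / (2 * s)) = t / 2 := by field_simp
    nlinarith [hs.le, hlog2]
  calc t ^ s = Real.exp (s * Real.log t) := by
        rw [Real.rpow_def_of_pos ht, mul_comm]
    _ ≤ Real.exp (s * Real.log s + t / 2) := Real.exp_le_exp.2 key
    _ = s ^ s * Real.exp (t / 2) := by
        rw [Real.exp_add, Real.rpow_def_of_pos hs, mul_comm (Real.log s)]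
lemma lint_half : ∫⁻ x in Set.Ioo (0:ℝ) 1, ENNReal.ofReal (x ^ (-(1/2) : ℝ)) = ENNReal.ofReal 2 := by
  have hint : IntervalIntegrable (fun x : ℝ => x ^ (-(1/2) : ℝ)) volume 0 1 :=
    intervalIntegral.intervalIntegrable_rpow' (by norm_num)
  have hIoc : IntegrableOn (fun x : ℝ => x ^ (-(1/2) : ℝ)) (Set.Ioc (0:ℝ) 1) volume := by
    rwa [intervalIntegrable_iff_integrableOn_Ioc_of_le (by norm_num)] at hint
  have hIoo : IntegrableOn (fun x : ℝ => x ^ (-(1/2) : ℝ)) (Set.Ioo (0:ℝ) 1) volume :=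
    hIoc.mono_set Set.Ioo_subset_Ioc_self
  have hval : ∫ x in Set.Ioo (0:ℝ) 1, x ^ (-(1/2) : ℝ) = 2 := by
    rw [← MeasureTheory.integral_Ioc_eq_integral_Ioo,
      ← intervalIntegral.integral_of_le (by norm_num : (0:ℝ) ≤ 1),
      integral_rpow (Or.inl (by norm_num))]
    norm_num
  rw [← ofReal_integral_eq_lintegral_ofReal hIoo ((ae_restrict_iff' measurableSet_Ioo).2
    (ae_of_all _ fun x hx => Real.rpow_nonneg hx.1.le _)), hval]


lemma lint_bound (s : ℝ) (hs : 0 < s) :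
    ∫⁻ x in Set.Ioo (0:ℝ) 1, ENNReal.ofReal ((-Real.log x) ^ s) ≤ ENNReal.ofReal (2 * s ^ s) := by
  have step : ∫⁻ x in Set.Ioo (0:ℝ) 1, ENNReal.ofReal ((-Real.log x) ^ s)
      ≤ ∫⁻ x in Set.Ioo (0:ℝ) 1, ENNReal.ofReal (s ^ s) * ENNReal.ofReal (x ^ (-(1/2) : ℝ)) := by
    refine setLIntegral_mono_ae (by fun_prop) ?_
    refine ae_of_all _ fun x hx => ?_
    have hx0 : 0 < x := hx.1
    have hlt : Real.log x < 0 := Real.log_neg hx0 hx.2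
    have hb : (-Real.log x) ^ s ≤ s ^ s * x ^ (-(1/2) : ℝ) := by
      have := ptwise s (-Real.log x) hs (by linarith)
      have hexp : Real.exp (-Real.log x / 2) = x ^ (-(1/2) : ℝ) := by
        rw [Real.rpow_def_of_pos hx0]; ring_nf
      rwa [hexp] at this
    calc ENNReal.ofReal ((-Real.log x) ^ s) ≤ ENNReal.ofReal (s ^ s * x ^ (-(1/2) : ℝ)) :=
          ENNReal.ofReal_le_ofReal hb
      _ = ENNReal.ofReal (s ^ s) * ENNReal.ofReal (x ^ (-(1/2) : ℝ)) :=
          ENNReal.ofReal_mul (Real.rpow_nonneg hs.le _)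
  refine step.trans ?_
  rw [lintegral_const_mul _ (by fun_prop), lint_half, ← ENNReal.ofReal_mul (Real.rpow_nonneg hs.le _)]
  exact ENNReal.ofReal_le_ofReal (by linarith [Real.rpow_nonneg hs.le s])

lemma lint_f (θ p : ℝ) (hθ0 : 0 < θ) (hp : 1 ≤ p) :
    ∫⁻ x in Set.Ioo (0:ℝ) 1, (‖(-Real.log x) ^ θ‖₊ : ℝ≥0∞) ^ p
      ≤ ENNReal.ofReal (2 * (θ * p) ^ (θ * p)) := by
  have hp0 : (0:ℝ) < p := by linarith
  have heq : ∫⁻ x in Set.Ioo (0:ℝ) 1, (‖(-Real.log x) ^ θ‖₊ : ℝ≥0∞) ^ p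
      = ∫⁻ x in Set.Ioo (0:ℝ) 1, ENNReal.ofReal ((-Real.log x) ^ (θ * p)) := by
    refine setLIntegral_congr_fun measurableSet_Ioo (fun x hx => ?_)
    have hlt : Real.log x < 0 := Real.log_neg hx.1 hx.2
    have hpos : (0:ℝ) ≤ -Real.log x := by linarith
    rw [← enorm_eq_nnnorm, Real.enorm_eq_ofReal (Real.rpow_nonneg hpos θ),
      ENNReal.ofReal_rpow_of_nonneg (Real.rpow_nonneg hpos θ) hp0.le,
      ← Real.rpow_mul hpos]
  rw [heq]
  exact lint_bound (θ * p) (by positivity)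

lemma real_bound (θ p : ℝ) (hθ0 : 0 < θ) (hθ1 : θ ≤ 1) (hp : 1 ≤ p) :
    p ^ (-θ) * (2 * (θ * p) ^ (θ * p)) ^ (1/p) ≤ 2 := by
  have hp0 : (0:ℝ) < p := by linarith
  have h1 : (2 * (θ * p) ^ (θ * p)) ^ (1/p)
      = 2 ^ (1/p) * ((θ * p) ^ (θ * p)) ^ (1/p) :=
    Real.mul_rpow (by norm_num) (by positivity)
  have h2 : ((θ * p) ^ (θ * p)) ^ (1/p) = (θ * p) ^ θ := by
    rw [← Real.rpow_mul (by positivity)]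
    congr 1; field_simp
  have h3 : (θ * p) ^ θ = θ ^ θ * p ^ θ := Real.mul_rpow hθ0.le hp0.le
  have h4 : p ^ (-θ) * p ^ θ = 1 := by
    rw [← Real.rpow_add hp0]; simp
  have h5 : (2:ℝ) ^ (1/p) ≤ 2 := by
    calc (2:ℝ) ^ (1/p) ≤ 2 ^ (1:ℝ) :=
          Real.rpow_le_rpow_of_exponent_le (by norm_num)
            (by rw [div_le_one hp0]; linarith)
      _ = 2 := Real.rpow_one 2
  have h6 : θ ^ θ ≤ 1 := Real.rpow_le_one hθ0.le hθ1 hθ0.le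
  calc p ^ (-θ) * (2 * (θ * p) ^ (θ * p)) ^ (1/p)
      = 2 ^ (1/p) * θ ^ θ * (p ^ (-θ) * p ^ θ) := by rw [h1, h2, h3]; ring
    _ = 2 ^ (1/p) * θ ^ θ := by rw [h4, mul_one]
    _ ≤ 2 * 1 := by
        refine mul_le_mul h5 h6 (by positivity) (by norm_num)
    _ = 2 := by norm_num

/-- for `0 < θ ≤ 1`, the function `f(x) = (-ln x)^θ` on `(0,1)` is not in
`L^∞(0,1)`, but lies in every `L^p(0,1)` with `‖f‖_{θ,∞)} ≤ 2`; consequently `L^∞` is a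
proper subspace of `L^{θ,∞)}`. -/
theorem linfty_proper_subspace_grand (θ : ℝ) (hθ0 : 0 < θ) (hθ1 : θ ≤ 1) :
    ¬ MemLp (fun x => (-Real.log x) ^ θ) ⊤ (volume.restrict (Set.Ioo (0:ℝ) 1)) ∧
    (∀ p : ℝ, 1 ≤ p →
      MemLp (fun x => (-Real.log x) ^ θ) (ENNReal.ofReal p)
        (volume.restrict (Set.Ioo (0:ℝ) 1))) ∧
    grandNorm (volume.restrict (Set.Ioo (0:ℝ) 1)) θ (fun x => (-Real.log x) ^ θ) ≤ 2 ∧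
    (∀ g : ℝ → ℝ, MemLp g ⊤ (volume.restrict (Set.Ioo (0:ℝ) 1)) →
      grandNorm (volume.restrict (Set.Ioo (0:ℝ) 1)) θ g < ⊤) := by
  set μ := volume.restrict (Set.Ioo (0:ℝ) 1) with hμ
  have hμuniv : μ Set.univ = 1 := by
    rw [hμ, Measure.restrict_apply_univ, Real.volume_Ioo]
    norm_num
  have hmeas : Measurable (fun x : ℝ => (-Real.log x) ^ θ) := by measurability
  refine ⟨?_, ?_, ?_, ?_⟩
  · -- not in L^∞
    intro h
    set C := eLpNormEssSup (fun x : ℝ => (-Real.log x) ^ θ) μ with hC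
    have hCt : C < ⊤ := by
      have := h.2; rwa [eLpNorm_exponent_top] at this
    have hae := enorm_ae_le_eLpNormEssSup (fun x : ℝ => (-Real.log x) ^ θ) μ
    set R := C.toReal with hR
    have hR0 : 0 ≤ R := ENNReal.toReal_nonneg
    set a := (R + 1) ^ (1/θ) with ha
    have ha0 : 0 < a := Real.rpow_pos_of_pos (by linarith) _
    set b := Real.exp (-a) with hb
    have hb0 : 0 < b := Real.exp_pos _
    have hb1 : b < 1 := Real.exp_lt_one_iff.2 (by linarith)
    have hsub : Set.Ioo (0:ℝ) b ⊆
        {x | ¬ (‖(-Real.log x) ^ θ‖₊ : ℝ≥0∞) ≤ C} := by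
      intro x hx
      have hx0 : 0 < x := hx.1
      have hlog : Real.log x < -a := by
        calc Real.log x < Real.log b := Real.log_lt_log hx0 hx.2
          _ = -a := Real.log_exp _
      have hgt : R + 1 < (-Real.log x) ^ θ := by
        have h1 : a ^ θ < (-Real.log x) ^ θ :=
          Real.rpow_lt_rpow ha0.le (by linarith) hθ0
        have h2 : a ^ θ = R + 1 := by
          rw [ha, ← Real.rpow_mul (by linarith), one_div_mul_cancel hθ0.ne',
            Real.rpow_one]
        linarith
      intro hle
      rw [← enorm_eq_nnnorm, Real.enorm_eq_ofReal (Real.rpow_nonneg (by linarith) θ)] at hle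
      have := (ENNReal.ofReal_le_iff_le_toReal hCt.ne).1 hle
      rw [← hR] at this
      linarith
    have h0 : μ (Set.Ioo (0:ℝ) b) = 0 :=
      measure_mono_null hsub (ae_iff.1 hae)
    have : μ (Set.Ioo (0:ℝ) b) = ENNReal.ofReal b := by
      rw [hμ, Measure.restrict_apply measurableSet_Ioo,
        Set.inter_eq_left.2 (Set.Ioo_subset_Ioo le_rfl hb1.le), Real.volume_Ioo]
      norm_num
    rw [this] at h0
    exact absurd h0 (ENNReal.ofReal_pos.2 hb0).ne'
  · -- in every L^p
    intro p hp
    have hp0 : (0:ℝ) < p := by linarith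
    refine ⟨hmeas.aestronglyMeasurable, ?_⟩
    rw [eLpNorm_eq_lintegral_rpow_enorm_toReal (ENNReal.ofReal_pos.2 hp0).ne'
      ENNReal.ofReal_ne_top, ENNReal.toReal_ofReal hp0.le]
    exact ENNReal.rpow_lt_top_of_nonneg (by positivity)
      ((lt_of_le_of_lt (lint_f θ p hθ0 hp) ENNReal.ofReal_lt_top).ne)
  · -- grandNorm ≤ 2
    rw [grandNorm]
    refine iSup₂_le fun p hp => ?_
    have hp0 : (0:ℝ) < p := by linarith
    rw [hμuniv, inv_one, one_mul]
    calc ENNReal.ofReal p ^ (-θ) * (∫⁻ x, (‖(-Real.log x) ^ θ‖₊ : ℝ≥0∞) ^ p ∂μ) ^ (1/p)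
        ≤ ENNReal.ofReal p ^ (-θ) * (ENNReal.ofReal (2 * (θ * p) ^ (θ * p))) ^ (1/p) := by
          exact mul_le_mul_right (ENNReal.rpow_le_rpow (lint_f θ p hθ0 hp) (by positivity)) _
      _ = ENNReal.ofReal (p ^ (-θ) * (2 * (θ * p) ^ (θ * p)) ^ (1/p)) := by
          rw [ENNReal.ofReal_rpow_of_pos hp0, ENNReal.ofReal_rpow_of_pos (by positivity),
            ← ENNReal.ofReal_mul (Real.rpow_nonneg hp0.le _)]
      _ ≤ ENNReal.ofReal 2 := ENNReal.ofReal_le_ofReal (real_bound θ p hθ0 hθ1 hp)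
      _ = 2 := by norm_num
  · -- bounded functions have finite grandNorm
    intro g hg
    set C := eLpNormEssSup g μ with hC
    have hCt : C < ⊤ := by
      have := hg.2; rwa [eLpNorm_exponent_top] at this
    have hbound : grandNorm μ θ g ≤ C := by
      rw [grandNorm]
      refine iSup₂_le fun p hp => ?_
      have hp0 : (0:ℝ) < p := by linarith
      have hae := enorm_ae_le_eLpNormEssSup g μ
      have hint : ∫⁻ x, (‖g x‖₊ : ℝ≥0∞) ^ p ∂μ ≤ C ^ p := by
        calc ∫⁻ x, (‖g x‖₊ : ℝ≥0∞) ^ p ∂μ ≤ ∫⁻ _, C ^ p ∂μ :=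
              lintegral_mono_ae (hae.mono fun x hx => ENNReal.rpow_le_rpow hx hp0.le)
          _ = C ^ p * μ Set.univ := lintegral_const _
          _ = C ^ p := by rw [hμuniv, mul_one]
      rw [hμuniv, inv_one, one_mul]
      calc ENNReal.ofReal p ^ (-θ) * (∫⁻ x, (‖g x‖₊ : ℝ≥0∞) ^ p ∂μ) ^ (1/p)
          ≤ ENNReal.ofReal p ^ (-θ) * (C ^ p) ^ (1/p) :=
            mul_le_mul_right (ENNReal.rpow_le_rpow hint (by positivity)) _
        _ = ENNReal.ofReal p ^ (-θ) * C := by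
            rw [← ENNReal.rpow_mul, mul_one_div_cancel hp0.ne', ENNReal.rpow_one]
        _ ≤ 1 * C := by
            refine mul_le_mul_left ?_ _
            rw [ENNReal.rpow_neg]
            refine ENNReal.inv_le_one.2 (ENNReal.one_le_rpow ?_ hθ0)
            rw [← ENNReal.ofReal_one]
            exact ENNReal.ofReal_le_ofReal hp
        _ = C := one_mul C
    exact lt_of_le_of_lt hbound hCt
end

section
/- Let Ω be a measure space with 0 < μ(Ω) < ∞ and let 0 ≤ θ < ∞. Then (L^{θ,∞)}(Ω), ‖·‖_{θ,∞)}) is a Banach space: every sequence {fₙ} in L^{θ,∞)}(Ω) that is Cauchy with respect to the norm ‖·‖_{θ,∞)} converges in this norm to some f ∈ L^{θ,∞)}(Ω). -/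
open MeasureTheory ENNReal

open Filter

lemma grandNorm_term_le {α : Type*} [MeasurableSpace α] (μ : Measure α) (θ : ℝ)
    (f : α → ℝ) {p : ℝ} (hp : 1 ≤ p) :
    ENNReal.ofReal p ^ (-θ) * ((μ Set.univ)⁻¹ * ∫⁻ x, (‖f x‖₊ : ℝ≥0∞) ^ p ∂μ) ^ (1 / p)
      ≤ grandNorm μ θ f :=
  le_iSup₂ (f := fun (q : ℝ) (_ : 1 ≤ q) =>
    ENNReal.ofReal q ^ (-θ) * ((μ Set.univ)⁻¹ * ∫⁻ x, (‖f x‖₊ : ℝ≥0∞) ^ q ∂μ) ^ (1 / q)) p hp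

lemma lintegral_le_of_grandNorm {α : Type*} [MeasurableSpace α] {μ : Measure α}
    (hμ0 : μ Set.univ ≠ 0) (hμtop : μ Set.univ ≠ ⊤) (θ : ℝ)
    (f : α → ℝ) {p : ℝ} (hp : 1 ≤ p) :
    ∫⁻ x, (‖f x‖₊ : ℝ≥0∞) ^ p ∂μ
      ≤ (ENNReal.ofReal p ^ θ * grandNorm μ θ f) ^ p * μ Set.univ := by
  have hp0 : p ≠ 0 := by linarith
  have hc0 : ENNReal.ofReal p ≠ 0 := (ENNReal.ofReal_pos.mpr (by linarith)).ne'
  have hctop : ENNReal.ofReal p ≠ ⊤ := ENNReal.ofReal_ne_top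
  set c := ENNReal.ofReal p
  set I := ∫⁻ x, (‖f x‖₊ : ℝ≥0∞) ^ p ∂μ with hI
  have h1 := grandNorm_term_le μ θ f hp
  have h2 : ((μ Set.univ)⁻¹ * I) ^ (1 / p) ≤ c ^ θ * grandNorm μ θ f := by
    calc ((μ Set.univ)⁻¹ * I) ^ (1 / p)
        = c ^ θ * (c ^ (-θ) * ((μ Set.univ)⁻¹ * I) ^ (1 / p)) := by
          rw [← mul_assoc, ← ENNReal.rpow_add _ _ hc0 hctop]
          simp
      _ ≤ c ^ θ * grandNorm μ θ f := mul_le_mul_right h1 _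
  have h3 : (μ Set.univ)⁻¹ * I ≤ (c ^ θ * grandNorm μ θ f) ^ p := by
    have := ENNReal.rpow_le_rpow h2 (by linarith : (0:ℝ) ≤ p)
    rwa [← ENNReal.rpow_mul, one_div_mul_cancel hp0, ENNReal.rpow_one] at this
  calc I = μ Set.univ * ((μ Set.univ)⁻¹ * I) := by
        rw [← mul_assoc, ENNReal.mul_inv_cancel hμ0 hμtop, one_mul]
    _ ≤ μ Set.univ * (c ^ θ * grandNorm μ θ f) ^ p := mul_le_mul_right h3 _
    _ = (c ^ θ * grandNorm μ θ f) ^ p * μ Set.univ := mul_comm _ _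

lemma grandNorm_le_of_lintegral {α : Type*} [MeasurableSpace α] {μ : Measure α}
    (hμ0 : μ Set.univ ≠ 0) (hμtop : μ Set.univ ≠ ⊤) {θ : ℝ} {g : α → ℝ} {ε : ℝ≥0∞}
    (h : ∀ p : ℝ, 1 ≤ p →
      ∫⁻ x, (‖g x‖₊ : ℝ≥0∞) ^ p ∂μ ≤ (ENNReal.ofReal p ^ θ * ε) ^ p * μ Set.univ) :
    grandNorm μ θ g ≤ ε := by
  refine iSup₂_le fun p hp => ?_
  have hp0 : p ≠ 0 := by linarith
  have hc0 : ENNReal.ofReal p ≠ 0 := (ENNReal.ofReal_pos.mpr (by linarith)).ne'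
  have hctop : ENNReal.ofReal p ≠ ⊤ := ENNReal.ofReal_ne_top
  set c := ENNReal.ofReal p
  set I := ∫⁻ x, (‖g x‖₊ : ℝ≥0∞) ^ p ∂μ with hI
  have h1 : (μ Set.univ)⁻¹ * I ≤ (c ^ θ * ε) ^ p := by
    calc (μ Set.univ)⁻¹ * I ≤ (μ Set.univ)⁻¹ * ((c ^ θ * ε) ^ p * μ Set.univ) :=
          mul_le_mul_right (h p hp) _
      _ = (c ^ θ * ε) ^ p := by
          rw [mul_comm ((c ^ θ * ε) ^ p) _, ← mul_assoc,
            ENNReal.inv_mul_cancel hμ0 hμtop, one_mul]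
  have h2 : ((μ Set.univ)⁻¹ * I) ^ (1 / p) ≤ c ^ θ * ε := by
    have := ENNReal.rpow_le_rpow h1 (by positivity : (0:ℝ) ≤ 1 / p)
    rwa [← ENNReal.rpow_mul, mul_one_div_cancel hp0, ENNReal.rpow_one] at this
  calc c ^ (-θ) * ((μ Set.univ)⁻¹ * I) ^ (1 / p) ≤ c ^ (-θ) * (c ^ θ * ε) :=
        mul_le_mul_right h2 _
    _ = ε := by
        rw [← mul_assoc, ← ENNReal.rpow_add _ _ hc0 hctop, neg_add_cancel,
          ENNReal.rpow_zero, one_mul]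

lemma grandNorm_add_le {α : Type*} [MeasurableSpace α] {μ : Measure α} {θ : ℝ}
    {f g : α → ℝ} (hf : AEStronglyMeasurable f μ) (hg : AEStronglyMeasurable g μ) :
    grandNorm μ θ (f + g) ≤ grandNorm μ θ f + grandNorm μ θ g := by
  refine iSup₂_le fun p hp => ?_
  have hp0 : p ≠ 0 := by linarith
  have hc0 : ENNReal.ofReal p ≠ 0 := (ENNReal.ofReal_pos.mpr (by linarith)).ne'
  have hctop : ENNReal.ofReal p ≠ ⊤ := ENNReal.ofReal_ne_top
  have key : ∀ h : α → ℝ,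
      (∫⁻ x, (‖h x‖₊ : ℝ≥0∞) ^ p ∂μ) ^ (1 / p) = eLpNorm h (ENNReal.ofReal p) μ := by
    intro h
    rw [eLpNorm_eq_lintegral_rpow_enorm_toReal hc0 hctop, ENNReal.toReal_ofReal (by linarith)]
    simp only [enorm_eq_nnnorm]
  have hterm : ∀ h : α → ℝ,
      ENNReal.ofReal p ^ (-θ) * ((μ Set.univ)⁻¹) ^ (1 / p) * eLpNorm h (ENNReal.ofReal p) μ
        ≤ grandNorm μ θ h := by
    intro h
    rw [← key, mul_assoc, ← ENNReal.mul_rpow_of_nonneg _ _ (by positivity : (0:ℝ) ≤ 1 / p)]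
    exact grandNorm_term_le μ θ h hp
  rw [ENNReal.mul_rpow_of_nonneg _ _ (by positivity : (0:ℝ) ≤ 1 / p), ← mul_assoc, key]
  calc ENNReal.ofReal p ^ (-θ) * ((μ Set.univ)⁻¹) ^ (1 / p)
        * eLpNorm (f + g) (ENNReal.ofReal p) μ
      ≤ ENNReal.ofReal p ^ (-θ) * ((μ Set.univ)⁻¹) ^ (1 / p)
        * (eLpNorm f (ENNReal.ofReal p) μ + eLpNorm g (ENNReal.ofReal p) μ) :=
        mul_le_mul_right (eLpNorm_add_le hf hg (ENNReal.one_le_ofReal.mpr hp)) _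
    _ = ENNReal.ofReal p ^ (-θ) * ((μ Set.univ)⁻¹) ^ (1 / p) * eLpNorm f (ENNReal.ofReal p) μ
        + ENNReal.ofReal p ^ (-θ) * ((μ Set.univ)⁻¹) ^ (1 / p)
          * eLpNorm g (ENNReal.ofReal p) μ := mul_add _ _ _
    _ ≤ grandNorm μ θ f + grandNorm μ θ g := add_le_add (hterm f) (hterm g)

/-- `(L^{θ,∞)}(Ω), ‖·‖_{θ,∞)})` is a Banach space: every Cauchy sequence
converges in the norm `‖·‖_{θ,∞)}` to an element of the space. -/
theorem grandNorm_complete {α : Type*} [MeasurableSpace α] (μ : Measure α)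
    (hμ0 : μ Set.univ ≠ 0) (hμtop : μ Set.univ ≠ ⊤)
    (θ : ℝ) (hθ : 0 ≤ θ)
    (F : ℕ → α → ℝ) (hFm : ∀ n, Measurable (F n))
    (hF : ∀ n, ∀ p : ℝ, 1 ≤ p → MemLp (F n) (ENNReal.ofReal p) μ)
    (hFn : ∀ n, grandNorm μ θ (F n) < ⊤)
    (hcau : ∀ ε : ℝ≥0∞, 0 < ε → ∃ N : ℕ, ∀ m ≥ N, ∀ n ≥ N,
      grandNorm μ θ (F m - F n) < ε) :
    ∃ f : α → ℝ,
      (∀ p : ℝ, 1 ≤ p → MemLp f (ENNReal.ofReal p) μ) ∧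
      grandNorm μ θ f < ⊤ ∧
      Filter.Tendsto (fun n => grandNorm μ θ (F n - f)) Filter.atTop (nhds 0) := by
  classical
  have hμi0 : (μ Set.univ)⁻¹ ≠ 0 := ENNReal.inv_ne_zero.mpr hμtop
  have htwo : ((2:ℝ≥0∞))⁻¹ ≠ 0 := ENNReal.inv_ne_zero.mpr (by simp)
  have htwotop : ((2:ℝ≥0∞))⁻¹ ≠ ⊤ := by simp
  have hεk : ∀ k : ℕ, (0:ℝ≥0∞) < 2⁻¹ ^ (k+1) * (μ Set.univ)⁻¹ :=
    fun k => ENNReal.mul_pos (pow_ne_zero _ htwo) hμi0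
  set c : ℕ → ℕ := fun k => (hcau _ (hεk k)).choose with hc
  have hcspec : ∀ k, ∀ m ≥ c k, ∀ n ≥ c k,
      grandNorm μ θ (F m - F n) < 2⁻¹ ^ (k+1) * (μ Set.univ)⁻¹ :=
    fun k => (hcau _ (hεk k)).choose_spec
  set idx : ℕ → ℕ := fun k => Nat.rec (c 0) (fun k ih => max (ih + 1) (c (k+1))) k with hidx
  have hidx_succ : ∀ k, idx (k+1) = max (idx k + 1) (c (k+1)) := fun k => rfl
  have hidx_mono : StrictMono idx := strictMono_nat_of_lt_succ fun n => by
    rw [hidx_succ]; exact lt_of_lt_of_le (Nat.lt_succ_self _) (le_max_left _ _)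
  have hidx_c : ∀ k, c k ≤ idx k := by
    intro k
    cases k with
    | zero => exact le_refl _
    | succ k => rw [hidx_succ]; exact le_max_right _ _
  have hL1 : ∀ g : α → ℝ, eLpNorm g 1 μ ≤ grandNorm μ θ g * μ Set.univ := by
    intro g
    have h := lintegral_le_of_grandNorm hμ0 hμtop θ g (le_refl (1:ℝ))
    rw [eLpNorm_one_eq_lintegral_enorm]
    simpa [ENNReal.ofReal_one, ENNReal.one_rpow, ENNReal.rpow_one, enorm_eq_nnnorm] using h
  have hGmem : ∀ k, MemLp (F (idx k)) 1 μ := fun k => by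
    have := hF (idx k) 1 le_rfl
    rwa [ENNReal.ofReal_one] at this
  have hBsum : (∑' n : ℕ, ((2:ℝ≥0∞))⁻¹ ^ n) ≠ ⊤ := by
    rw [ENNReal.tsum_geometric, ENNReal.one_sub_inv_two]
    simp
  have h_cau1 : ∀ N n m : ℕ, N ≤ n → N ≤ m →
      eLpNorm ((fun k => F (idx k)) n - (fun k => F (idx k)) m) 1 μ < 2⁻¹ ^ N := by
    intro N n m hn hm
    have h1 : grandNorm μ θ (F (idx n) - F (idx m)) < 2⁻¹ ^ (N+1) * (μ Set.univ)⁻¹ :=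
      hcspec N _ ((hidx_c N).trans (hidx_mono.monotone hn)) _
        ((hidx_c N).trans (hidx_mono.monotone hm))
    calc eLpNorm (F (idx n) - F (idx m)) 1 μ
        ≤ grandNorm μ θ (F (idx n) - F (idx m)) * μ Set.univ := hL1 _
      _ < (2⁻¹ ^ (N+1) * (μ Set.univ)⁻¹) * μ Set.univ :=
          (ENNReal.mul_lt_mul_iff_left hμ0 hμtop).mpr h1
      _ = 2⁻¹ ^ (N+1) := by rw [mul_assoc, ENNReal.inv_mul_cancel hμ0 hμtop, mul_one]
      _ < 2⁻¹ ^ N := by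
          rw [pow_succ]
          calc (2⁻¹:ℝ≥0∞) ^ N * 2⁻¹ < 2⁻¹ ^ N * 1 :=
              (ENNReal.mul_lt_mul_iff_right (pow_ne_zero _ htwo) (ENNReal.pow_ne_top htwotop)).mpr
                (ENNReal.inv_lt_one.mpr one_lt_two)
            _ = 2⁻¹ ^ N := mul_one _
  obtain ⟨f, hfL1, htendL1⟩ := MeasureTheory.Lp.cauchy_complete_eLpNorm (le_refl (1:ℝ≥0∞)) hGmem hBsum h_cau1
  have hmeas : TendstoInMeasure μ (fun k => F (idx k)) atTop f :=
    tendstoInMeasure_of_tendsto_eLpNorm one_ne_zero (fun n => (hGmem n).1) hfL1.1 htendL1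
  obtain ⟨ns, hns_mono, h_ae⟩ := hmeas.exists_seq_tendsto_ae
  set ms : ℕ → ℕ := fun k => idx (ns k) with hms
  have hms_ge : ∀ k, k ≤ ms k := fun k => (hns_mono.id_le k).trans (hidx_mono.id_le (ns k))
  have key : ∀ ε : ℝ≥0∞, 0 < ε → ∃ N : ℕ, ∀ n ≥ N, ∀ p : ℝ, 1 ≤ p →
      ∫⁻ x, (‖F n x - f x‖₊ : ℝ≥0∞) ^ p ∂μ
        ≤ (ENNReal.ofReal p ^ θ * ε) ^ p * μ Set.univ := by
    intro ε hε
    obtain ⟨N, hN⟩ := hcau ε hε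
    refine ⟨N, fun n hn p hp => ?_⟩
    have hlim : ∀ᵐ x ∂μ, (‖F n x - f x‖₊ : ℝ≥0∞) ^ p
        = Filter.liminf (fun k => (‖F n x - F (ms k) x‖₊ : ℝ≥0∞) ^ p) Filter.atTop := by
      filter_upwards [h_ae] with x hx
      have h2 : Filter.Tendsto (fun k => F n x - F (ms k) x) Filter.atTop
          (nhds (F n x - f x)) := tendsto_const_nhds.sub hx
      have h1 : Filter.Tendsto (fun k => (‖F n x - F (ms k) x‖₊ : ℝ≥0∞) ^ p) Filter.atTop
          (nhds ((‖F n x - f x‖₊ : ℝ≥0∞) ^ p)) :=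
        ((ENNReal.continuous_rpow_const (y := p)).tendsto _).comp
          ((ENNReal.continuous_coe.tendsto _).comp h2.nnnorm)
      exact h1.liminf_eq.symm
    rw [lintegral_congr_ae hlim]
    have hbound : ∀ k, N ≤ k →
        (∫⁻ x, (‖F n x - F (ms k) x‖₊ : ℝ≥0∞) ^ p ∂μ)
          ≤ (ENNReal.ofReal p ^ θ * ε) ^ p * μ Set.univ := by
      intro k hk
      have h3 : grandNorm μ θ (F n - F (ms k)) < ε := hN n hn (ms k) (hk.trans (hms_ge k))
      have h4 := lintegral_le_of_grandNorm hμ0 hμtop θ (F n - F (ms k)) hp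
      refine le_trans (le_of_eq ?_) (le_trans h4 ?_)
      · exact lintegral_congr fun x => by rw [Pi.sub_apply]
      · exact mul_le_mul_left
          (ENNReal.rpow_le_rpow (mul_le_mul_right h3.le _) (by linarith)) _
    calc ∫⁻ x, Filter.liminf (fun k => (‖F n x - F (ms k) x‖₊ : ℝ≥0∞) ^ p) Filter.atTop ∂μ
        ≤ Filter.liminf (fun k => ∫⁻ x, (‖F n x - F (ms k) x‖₊ : ℝ≥0∞) ^ p ∂μ) Filter.atTop :=
          lintegral_liminf_le fun k =>
            (ENNReal.continuous_rpow_const (y := p)).measurable.comp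
              ((hFm n).sub (hFm (ms k))).enorm
      _ ≤ (ENNReal.ofReal p ^ θ * ε) ^ p * μ Set.univ :=
          Filter.liminf_le_of_frequently_le'
            ((Filter.eventually_atTop.mpr ⟨N, hbound⟩).frequently)
  have htend : Filter.Tendsto (fun n => grandNorm μ θ (F n - f)) Filter.atTop (nhds 0) := by
    rw [ENNReal.tendsto_atTop_zero]
    intro ε hε
    obtain ⟨N, hN⟩ := key ε hε
    exact ⟨N, fun n hn => grandNorm_le_of_lintegral hμ0 hμtop fun p hp => by
      refine le_trans (le_of_eq ?_) (hN n hn p hp)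
      exact lintegral_congr fun x => by rw [Pi.sub_apply]⟩
  obtain ⟨N₁, hN₁⟩ := key 1 zero_lt_one
  have hsubmem : ∀ p : ℝ, 1 ≤ p → MemLp (f - F N₁) (ENNReal.ofReal p) μ := by
    intro p hp
    have hc0 : ENNReal.ofReal p ≠ 0 := (ENNReal.ofReal_pos.mpr (by linarith)).ne'
    refine ⟨hfL1.1.sub (hFm N₁).aestronglyMeasurable, ?_⟩
    rw [eLpNorm_eq_lintegral_rpow_enorm_toReal hc0 ENNReal.ofReal_ne_top,
      ENNReal.toReal_ofReal (by linarith)]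
    apply ENNReal.rpow_lt_top_of_nonneg (by positivity)
    have h5 : ∫⁻ x, (‖(f - F N₁) x‖₊ : ℝ≥0∞) ^ p ∂μ
        = ∫⁻ x, (‖F N₁ x - f x‖₊ : ℝ≥0∞) ^ p ∂μ :=
      lintegral_congr fun x => by rw [Pi.sub_apply, ← neg_sub (F N₁ x) (f x), nnnorm_neg]
    simp only [enorm_eq_nnnorm]
    rw [h5]
    refine ne_of_lt (lt_of_le_of_lt (hN₁ N₁ le_rfl p hp) ?_)
    refine ENNReal.mul_lt_top ?_ (lt_top_iff_ne_top.mpr hμtop)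
    refine ENNReal.rpow_lt_top_of_nonneg (by linarith) ?_
    rw [mul_one]
    exact ENNReal.rpow_ne_top_of_nonneg hθ ENNReal.ofReal_ne_top
  have heq : (f - F N₁) + F N₁ = f := by funext x; simp
  have hfmem : ∀ p : ℝ, 1 ≤ p → MemLp f (ENNReal.ofReal p) μ := by
    intro p hp
    have := (hsubmem p hp).add (hF N₁ p hp)
    rwa [heq] at this
  have hfin : grandNorm μ θ f < ⊤ := by
    have h1 : grandNorm μ θ (f - F N₁) ≤ 1 :=
      grandNorm_le_of_lintegral hμ0 hμtop fun p hp => by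
        refine le_trans (le_of_eq ?_) (hN₁ N₁ le_rfl p hp)
        exact lintegral_congr fun x => by rw [Pi.sub_apply, ← neg_sub (F N₁ x) (f x), nnnorm_neg]
    calc grandNorm μ θ f = grandNorm μ θ ((f - F N₁) + F N₁) := by rw [heq]
      _ ≤ grandNorm μ θ (f - F N₁) + grandNorm μ θ (F N₁) :=
          grandNorm_add_le (hfL1.1.sub (hFm N₁).aestronglyMeasurable)
            (hFm N₁).aestronglyMeasurable
      _ < ⊤ := ENNReal.add_lt_top.mpr ⟨lt_of_le_of_lt h1 ENNReal.one_lt_top, hFn N₁⟩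
  exact ⟨f, hfmem, hfin, htend⟩
end

section
/- Let Ω be a measure space with 0 < μ(Ω) < ∞ and let 0 ≤ θ < ∞. A measurable function f belongs to L^{θ,∞)}(Ω) if and only if it belongs to L^{θ,∞}_{weak}(Ω); that is, L^{θ,∞}_{weak}(Ω) = L^{θ,∞)}(Ω) as sets of measurable functions. -/
open MeasureTheory ENNReal

/-- The weak Marcinkiewicz quantity `M_p(f) = ((1/μ(Ω)) sup_{t>0} t^p μ{|f| > t})^{1/p}`. -/
noncomputable def weakMp {α : Type*} [MeasurableSpace α] (μ : Measure α) (p : ℝ)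
    (f : α → ℝ) : ℝ≥0∞ :=
  ((μ Set.univ)⁻¹ * ⨆ (t : ℝ) (_ : 0 < t), ENNReal.ofReal t ^ p * μ {x | t < |f x|}) ^ (1 / p)

section Aux

open Set Filter

variable {α : Type*} [MeasurableSpace α]

/-- Chebyshev: the weak sup is dominated by the `p`-th moment. -/
lemma grand_cheb (μ : Measure α) (f : α → ℝ) (hmeas : Measurable f) {p : ℝ} (hp : 0 < p) :
    (⨆ (t : ℝ) (_ : 0 < t), ENNReal.ofReal t ^ p * μ {x | t < |f x|}) ≤
      ∫⁻ x, (‖f x‖₊ : ℝ≥0∞) ^ p ∂μ := by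
  refine iSup₂_le fun t ht => ?_
  calc ENNReal.ofReal t ^ p * μ {x | t < |f x|}
      ≤ ENNReal.ofReal t ^ p * μ {x | ENNReal.ofReal t ^ p ≤ (‖f x‖₊ : ℝ≥0∞) ^ p} := by
        gcongr
        intro hx
        refine ENNReal.rpow_le_rpow ?_ hp.le
        rw [← enorm_eq_nnnorm, Real.enorm_eq_ofReal_abs]
        exact ENNReal.ofReal_le_ofReal hx.le
    _ ≤ ∫⁻ x, (‖f x‖₊ : ℝ≥0∞) ^ p ∂μ :=
        mul_meas_ge_le_lintegral₀
          ((measurable_coe_nnreal_ennreal.comp hmeas.nnnorm).pow_const p).aemeasurable _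

lemma grand_eLp_eq (μ : Measure α) (f : α → ℝ) {p : ℝ} (hp : 1 ≤ p) :
    eLpNorm f (ENNReal.ofReal p) μ = (∫⁻ x, (‖f x‖₊ : ℝ≥0∞) ^ p ∂μ) ^ (1/p) := by
  rw [eLpNorm_eq_lintegral_rpow_enorm_toReal (by simpa using by linarith : ENNReal.ofReal p ≠ 0)
    ENNReal.ofReal_ne_top, ENNReal.toReal_ofReal (by linarith)]
  rfl

/-- Layer-cake bound: split the tail integral at `t₀`. -/
lemma grand_layerbd (μ : Measure α) (hμtop : μ Set.univ ≠ ⊤) (f : α → ℝ) (hmeas : Measurable f)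
    {p : ℝ} (hp : 1 ≤ p) {t₀ : ℝ} (ht₀ : 0 < t₀)
    (hSfin : (⨆ (t : ℝ) (_ : 0 < t), ENNReal.ofReal t ^ (p+1) * μ {x | t < |f x|}) ≠ ⊤) :
    ∫⁻ x, (‖f x‖₊ : ℝ≥0∞) ^ p ∂μ ≤
      μ Set.univ * ENNReal.ofReal (t₀ ^ p) +
        ENNReal.ofReal p *
          ((⨆ (t : ℝ) (_ : 0 < t), ENNReal.ofReal t ^ (p+1) * μ {x | t < |f x|}) *
            ENNReal.ofReal t₀⁻¹) := by
  have hp0 : (0:ℝ) < p := by linarith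
  set S := ⨆ (t : ℝ) (_ : 0 < t), ENNReal.ofReal t ^ (p+1) * μ {x | t < |f x|} with hS
  have hI : ∫⁻ x, (‖f x‖₊ : ℝ≥0∞) ^ p ∂μ = ∫⁻ x, ENNReal.ofReal (|f x| ^ p) ∂μ := by
    refine lintegral_congr fun x => ?_
    rw [← enorm_eq_nnnorm, Real.enorm_eq_ofReal_abs, ENNReal.ofReal_rpow_of_nonneg (abs_nonneg _) hp0.le]
  rw [hI, lintegral_rpow_eq_lintegral_meas_lt_mul μ (Eventually.of_forall fun x => abs_nonneg (f x))
    hmeas.abs.aemeasurable hp0]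
  have hsplit : ∫⁻ t in Ioi 0, μ {a | t < |f a|} * ENNReal.ofReal (t ^ (p - 1)) =
      (∫⁻ t in Ioc 0 t₀, μ {a | t < |f a|} * ENNReal.ofReal (t ^ (p - 1))) +
      ∫⁻ t in Ioi t₀, μ {a | t < |f a|} * ENNReal.ofReal (t ^ (p - 1)) := by
    rw [← lintegral_union measurableSet_Ioi Set.Ioc_disjoint_Ioi_same,
      Set.Ioc_union_Ioi_eq_Ioi ht₀.le]
  rw [hsplit, mul_add]
  gcongr ?_ + ?_
  · -- piece on (0, t₀]
    have step1 : ∫⁻ t in Ioc 0 t₀, μ {a | t < |f a|} * ENNReal.ofReal (t ^ (p - 1)) ≤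
        μ Set.univ * ∫⁻ t in Ioc 0 t₀, ENNReal.ofReal (t ^ (p - 1)) := by
      rw [← lintegral_const_mul' _ _ hμtop]
      exact lintegral_mono fun t => mul_le_mul_left (measure_mono (Set.subset_univ _)) _
    have int1 : IntegrableOn (fun t => t ^ (p-1)) (Ioc 0 t₀) volume := by
      have := intervalIntegral.intervalIntegrable_rpow' (show (-1:ℝ) < p-1 by linarith)
        (a := 0) (b := t₀)
      rwa [intervalIntegrable_iff_integrableOn_Ioc_of_le ht₀.le] at this
    have e1 : ∫⁻ t in Ioc 0 t₀, ENNReal.ofReal (t ^ (p-1)) = ENNReal.ofReal (t₀ ^ p / p) := by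
      rw [← ofReal_integral_eq_lintegral_ofReal int1 ?_]
      · congr 1
        rw [← intervalIntegral.integral_of_le ht₀.le,
          integral_rpow (Or.inl (by linarith : (-1:ℝ) < p - 1))]
        rw [sub_add_cancel, Real.zero_rpow hp0.ne', sub_zero]
      · filter_upwards [self_mem_ae_restrict measurableSet_Ioc] with t ht
        exact Real.rpow_nonneg ht.1.le _
    calc ENNReal.ofReal p * ∫⁻ t in Ioc 0 t₀, μ {a | t < |f a|} * ENNReal.ofReal (t ^ (p - 1))
        ≤ ENNReal.ofReal p * (μ Set.univ * ENNReal.ofReal (t₀ ^ p / p)) := by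
          rw [e1] at step1; exact mul_le_mul_right step1 _
      _ = μ Set.univ * (ENNReal.ofReal p * ENNReal.ofReal (t₀ ^ p / p)) := by ring
      _ = μ Set.univ * ENNReal.ofReal (t₀ ^ p) := by
          rw [← ENNReal.ofReal_mul hp0.le, mul_div_cancel₀ _ hp0.ne']
  · -- piece on (t₀, ∞)
    gcongr
    have step2 : ∫⁻ t in Ioi t₀, μ {a | t < |f a|} * ENNReal.ofReal (t ^ (p - 1)) ≤
        ∫⁻ t in Ioi t₀, S * ENNReal.ofReal (t ^ (-2 : ℝ)) := by
      refine lintegral_mono_ae ?_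
      filter_upwards [self_mem_ae_restrict measurableSet_Ioi] with t ht
      have ht0 : (0:ℝ) < t := ht₀.trans ht
      have hne0 : ENNReal.ofReal t ^ (p+1) ≠ 0 := by
        simp [ENNReal.rpow_eq_zero_iff, ht0, ENNReal.ofReal_pos.mpr ht0]
      have hnetop : ENNReal.ofReal t ^ (p+1) ≠ ⊤ :=
        ENNReal.rpow_ne_top_of_nonneg (by linarith) ENNReal.ofReal_ne_top
      have hmb : μ {a | t < |f a|} ≤ ENNReal.ofReal t ^ (-(p+1)) * S := by
        have hterm : ENNReal.ofReal t ^ (p+1) * μ {a | t < |f a|} ≤ S :=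
          le_iSup₂ (f := fun (t:ℝ) (_ : 0 < t) => ENNReal.ofReal t ^ (p+1) * μ {x | t < |f x|})
            t ht0
        calc μ {a | t < |f a|}
            = (ENNReal.ofReal t ^ (p+1))⁻¹ * (ENNReal.ofReal t ^ (p+1) * μ {a | t < |f a|}) := by
              rw [← mul_assoc, ENNReal.inv_mul_cancel hne0 hnetop, one_mul]
          _ ≤ (ENNReal.ofReal t ^ (p+1))⁻¹ * S := mul_le_mul_right hterm _
          _ = ENNReal.ofReal t ^ (-(p+1)) * S := by rw [ENNReal.rpow_neg]
      calc μ {a | t < |f a|} * ENNReal.ofReal (t ^ (p - 1))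
          ≤ (ENNReal.ofReal t ^ (-(p+1)) * S) * ENNReal.ofReal (t ^ (p - 1)) :=
            mul_le_mul_left hmb _
        _ = S * (ENNReal.ofReal (t ^ (-(p+1))) * ENNReal.ofReal (t ^ (p - 1))) := by
            rw [ENNReal.ofReal_rpow_of_pos ht0]; ring
        _ = S * ENNReal.ofReal (t ^ (-2 : ℝ)) := by
            rw [← ENNReal.ofReal_mul (Real.rpow_nonneg ht0.le _), ← Real.rpow_add ht0,
              show -(p+1)+(p-1) = (-2:ℝ) by ring]
    have int2 : IntegrableOn (fun t => t ^ (-2:ℝ)) (Ioi t₀) volume :=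
      integrableOn_Ioi_rpow_of_lt (by norm_num) ht₀
    have e2 : ∫⁻ t in Ioi t₀, ENNReal.ofReal (t ^ (-2:ℝ)) = ENNReal.ofReal t₀⁻¹ := by
      rw [← ofReal_integral_eq_lintegral_ofReal int2 ?_]
      · congr 1
        rw [integral_Ioi_rpow_of_lt (by norm_num) ht₀]
        norm_num [Real.rpow_neg_one]
      · filter_upwards [self_mem_ae_restrict measurableSet_Ioi] with t ht
        exact Real.rpow_nonneg (ht₀.trans ht).le _
    calc ∫⁻ t in Ioi t₀, μ {a | t < |f a|} * ENNReal.ofReal (t ^ (p - 1))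
        ≤ ∫⁻ t in Ioi t₀, S * ENNReal.ofReal (t ^ (-2 : ℝ)) := step2
      _ = S * ENNReal.ofReal t₀⁻¹ := by rw [lintegral_const_mul' _ _ hSfin, e2]

/-- Main quantitative bound: `(μΩ)⁻¹ ∫ |f|^p ≤ (1+p) · M_{p+1}(f)^p`. -/
lemma grand_mainbd (μ : Measure α) (hμ0 : μ Set.univ ≠ 0) (hμtop : μ Set.univ ≠ ⊤)
    (f : α → ℝ) (hmeas : Measurable f) {p : ℝ} (hp : 1 ≤ p) :
    (μ Set.univ)⁻¹ * ∫⁻ x, (‖f x‖₊ : ℝ≥0∞) ^ p ∂μ ≤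
      (1 + ENNReal.ofReal p) * weakMp μ (p+1) f ^ p := by
  have hp0 : (0:ℝ) < p := by linarith
  have hp10 : p + 1 ≠ 0 := by positivity
  set S := ⨆ (t : ℝ) (_ : 0 < t), ENNReal.ofReal t ^ (p+1) * μ {x | t < |f x|} with hS
  have hW : weakMp μ (p+1) f = ((μ Set.univ)⁻¹ * S) ^ (1/(p+1)) := rfl
  rcases eq_or_ne S ⊤ with hStop | hStop
  · -- `S = ⊤`: the right-hand side is `⊤`
    have hWtop : weakMp μ (p+1) f = ⊤ := by
      rw [hW, hStop, ENNReal.mul_top (ENNReal.inv_ne_zero.mpr hμtop),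
        ENNReal.top_rpow_of_pos (by positivity)]
    rw [hWtop, ENNReal.top_rpow_of_pos hp0,
      ENNReal.mul_top (by simp : (1:ℝ≥0∞) + ENNReal.ofReal p ≠ 0)]
    exact le_top
  rcases eq_or_ne S 0 with hS0 | hS0
  · -- `S = 0`: then `f = 0` a.e. and the left side vanishes
    have hnull : ∀ t : ℝ, 0 < t → μ {x | t < |f x|} = 0 := by
      intro t ht
      have hterm : ENNReal.ofReal t ^ (p+1) * μ {x | t < |f x|} = 0 := by
        refine le_antisymm ?_ zero_le
        rw [← hS0]
        exact le_iSup₂ (f := fun (t:ℝ) (_ : 0 < t) =>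
          ENNReal.ofReal t ^ (p+1) * μ {x | t < |f x|}) t ht
      rcases mul_eq_zero.mp hterm with h | h
      · exact absurd h (by simp [ENNReal.rpow_eq_zero_iff, ht, ENNReal.ofReal_pos.mpr ht])
      · exact h
    have hae : ∀ᵐ x ∂μ, f x = 0 := by
      have hU : μ {x | f x ≠ 0} = 0 := by
        have hsub : {x | f x ≠ 0} ⊆ ⋃ n : ℕ, {x | (1:ℝ)/(n+1) < |f x|} := by
          intro x hx
          obtain ⟨n, hn⟩ := exists_nat_one_div_lt (abs_pos.mpr hx)
          exact Set.mem_iUnion.mpr ⟨n, hn⟩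
        refine measure_mono_null hsub (measure_iUnion_null fun n => hnull _ (by positivity))
      filter_upwards [measure_eq_zero_iff_ae_notMem.mp hU] with x hx
      simpa using hx
    have hL : ∫⁻ x, (‖f x‖₊ : ℝ≥0∞) ^ p ∂μ = 0 := by
      rw [show (0:ℝ≥0∞) = ∫⁻ _x, (0:ℝ≥0∞) ∂μ by simp]
      refine lintegral_congr_ae ?_
      filter_upwards [hae] with x hx
      simp [hx, ENNReal.zero_rpow_of_pos hp0]
    rw [hL, mul_zero]
    exact zero_le
  · -- main case: `0 < S < ⊤`
    have hinv0 : (μ Set.univ)⁻¹ ≠ 0 := ENNReal.inv_ne_zero.mpr hμtop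
    have hinvtop : (μ Set.univ)⁻¹ ≠ ⊤ := ENNReal.inv_ne_top.mpr hμ0
    have hmul0 : (μ Set.univ)⁻¹ * S ≠ 0 := mul_ne_zero hinv0 hS0
    have hmultop : (μ Set.univ)⁻¹ * S ≠ ⊤ := ENNReal.mul_ne_top hinvtop hStop
    have hW0 : weakMp μ (p+1) f ≠ 0 := by
      rw [hW]
      simp [ENNReal.rpow_eq_zero_iff, hmul0, hmultop]
    have hWtop : weakMp μ (p+1) f ≠ ⊤ := by
      rw [hW]
      exact ENNReal.rpow_ne_top_of_nonneg (by positivity) hmultop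
    set t₀ := (weakMp μ (p+1) f).toReal with ht₀def
    have ht₀ : 0 < t₀ := ENNReal.toReal_pos hW0 hWtop
    have hofW : ENNReal.ofReal t₀ = weakMp μ (p+1) f := ENNReal.ofReal_toReal hWtop
    have hWp1 : weakMp μ (p+1) f ^ (p+1) = (μ Set.univ)⁻¹ * S := by
      rw [hW, ← ENNReal.rpow_mul, one_div, inv_mul_cancel₀ hp10, ENNReal.rpow_one]
    have hSeq : S = μ Set.univ * weakMp μ (p+1) f ^ (p+1) := by
      rw [hWp1, ← mul_assoc, ENNReal.mul_inv_cancel hμ0 hμtop, one_mul]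
    have key := grand_layerbd μ hμtop f hmeas hp ht₀ hStop
    have hRHS : μ Set.univ * ENNReal.ofReal (t₀ ^ p) +
        ENNReal.ofReal p * (S * ENNReal.ofReal t₀⁻¹) =
        (1 + ENNReal.ofReal p) * (μ Set.univ * weakMp μ (p+1) f ^ p) := by
      have h1 : ENNReal.ofReal (t₀ ^ p) = weakMp μ (p+1) f ^ p := by
        rw [← ENNReal.ofReal_rpow_of_pos ht₀, hofW]
      have h2 : ENNReal.ofReal t₀⁻¹ = (weakMp μ (p+1) f)⁻¹ := by
        rw [ENNReal.ofReal_inv_of_pos ht₀, hofW]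
      have h3 : S * ENNReal.ofReal t₀⁻¹ = μ Set.univ * weakMp μ (p+1) f ^ p := by
        rw [h2, hSeq, show p + 1 = p + (1:ℝ) from rfl, ENNReal.rpow_add _ _ hW0 hWtop,
          ENNReal.rpow_one, mul_assoc, mul_assoc, ENNReal.mul_inv_cancel hW0 hWtop, mul_one]
      rw [h1, h3]; ring
    rw [hRHS] at key
    calc (μ Set.univ)⁻¹ * ∫⁻ x, (‖f x‖₊ : ℝ≥0∞) ^ p ∂μ
        ≤ (μ Set.univ)⁻¹ * ((1 + ENNReal.ofReal p) * (μ Set.univ * weakMp μ (p+1) f ^ p)) :=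
          mul_le_mul_right key _
      _ = ((μ Set.univ)⁻¹ * μ Set.univ) *
            ((1 + ENNReal.ofReal p) * weakMp μ (p+1) f ^ p) := by ring
      _ = (1 + ENNReal.ofReal p) * weakMp μ (p+1) f ^ p := by
          rw [ENNReal.inv_mul_cancel hμ0 hμtop, one_mul]

end Aux

/-- Theorem 3.1: `L^{θ,∞}_{weak}(Ω) = L^{θ,∞)}(Ω)`. -/
theorem grand_eq_weak {α : Type*} [MeasurableSpace α] (μ : Measure α)
    (hμ0 : μ Set.univ ≠ 0) (hμtop : μ Set.univ ≠ ⊤)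
    (θ : ℝ) (hθ : 0 ≤ θ)
    (f : α → ℝ) (hmeas : Measurable f) :
    ((∀ p : ℝ, 1 ≤ p → MemLp f (ENNReal.ofReal p) μ) ∧ grandNorm μ θ f < ⊤) ↔
      ((∀ p : ℝ, 1 ≤ p → weakMp μ p f < ⊤) ∧
        (⨆ (p : ℝ) (_ : 1 ≤ p), ENNReal.ofReal p ^ (-θ) * weakMp μ p f) < ⊤) := by
  have hinv0 : (μ Set.univ)⁻¹ ≠ 0 := ENNReal.inv_ne_zero.mpr hμtop
  have hinvtop : (μ Set.univ)⁻¹ ≠ ⊤ := ENNReal.inv_ne_top.mpr hμ0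
  constructor
  · rintro ⟨h1, h2⟩
    have hIfin : ∀ p : ℝ, 1 ≤ p → (∫⁻ x, (‖f x‖₊ : ℝ≥0∞) ^ p ∂μ) ≠ ⊤ := by
      intro p hp
      have hp0 : (0:ℝ) < p := by linarith
      have hE := (h1 p hp).2
      rw [grand_eLp_eq μ f hp] at hE
      have : ((∫⁻ x, (‖f x‖₊ : ℝ≥0∞) ^ p ∂μ) ^ (1/p)) ^ p ≠ ⊤ :=
        (ENNReal.rpow_lt_top_of_nonneg hp0.le hE.ne).ne
      rwa [← ENNReal.rpow_mul, one_div, inv_mul_cancel₀ hp0.ne', ENNReal.rpow_one] at this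
    have hWle : ∀ p : ℝ, 1 ≤ p → weakMp μ p f ≤
        ((μ Set.univ)⁻¹ * ∫⁻ x, (‖f x‖₊ : ℝ≥0∞) ^ p ∂μ) ^ (1/p) := by
      intro p hp
      refine ENNReal.rpow_le_rpow (mul_le_mul_right ?_ _) (by positivity)
      exact grand_cheb μ f hmeas (by linarith)
    constructor
    · intro p hp
      refine lt_of_le_of_lt (hWle p hp) ?_
      exact ENNReal.rpow_lt_top_of_nonneg (by positivity)
        (ENNReal.mul_ne_top hinvtop (hIfin p hp))
    · refine lt_of_le_of_lt ?_ h2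
      refine iSup₂_le fun p hp => ?_
      refine le_trans (mul_le_mul_right (hWle p hp) _) ?_
      exact le_iSup₂ (f := fun (p:ℝ) (_ : 1 ≤ p) => ENNReal.ofReal p ^ (-θ) *
        ((μ Set.univ)⁻¹ * ∫⁻ x, (‖f x‖₊ : ℝ≥0∞) ^ p ∂μ) ^ (1/p)) p hp
  · rintro ⟨h1, h2⟩
    set B := ⨆ (p : ℝ) (_ : 1 ≤ p), ENNReal.ofReal p ^ (-θ) * weakMp μ p f with hB
    have hIle : ∀ p : ℝ, 1 ≤ p → (μ Set.univ)⁻¹ * ∫⁻ x, (‖f x‖₊ : ℝ≥0∞) ^ p ∂μ ≤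
        (1 + ENNReal.ofReal p) * weakMp μ (p+1) f ^ p :=
      fun p hp => grand_mainbd μ hμ0 hμtop f hmeas hp
    have hIfin : ∀ p : ℝ, 1 ≤ p → (∫⁻ x, (‖f x‖₊ : ℝ≥0∞) ^ p ∂μ) ≠ ⊤ := by
      intro p hp
      have hp0 : (0:ℝ) < p := by linarith
      have hRfin : (1 + ENNReal.ofReal p) * weakMp μ (p+1) f ^ p ≠ ⊤ := by
        refine ENNReal.mul_ne_top (by simp) ?_
        exact (ENNReal.rpow_lt_top_of_nonneg hp0.le (h1 (p+1) (by linarith)).ne).ne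
      have : (μ Set.univ)⁻¹ * ∫⁻ x, (‖f x‖₊ : ℝ≥0∞) ^ p ∂μ ≠ ⊤ :=
        ne_top_of_le_ne_top hRfin (hIle p hp)
      intro hcon
      rw [hcon, ENNReal.mul_top hinv0] at this
      exact this rfl
    constructor
    · intro p hp
      refine ⟨hmeas.aestronglyMeasurable, ?_⟩
      rw [grand_eLp_eq μ f hp]
      exact ENNReal.rpow_lt_top_of_nonneg (by positivity) (hIfin p hp)
    · -- bound the grand norm by `2^θ * (2 * B)`
      have hterm : ∀ p : ℝ, 1 ≤ p →
          ENNReal.ofReal p ^ (-θ) *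
            ((μ Set.univ)⁻¹ * ∫⁻ x, (‖f x‖₊ : ℝ≥0∞) ^ p ∂μ) ^ (1/p) ≤
          (2:ℝ≥0∞) ^ θ * (2 * B) := by
        intro p hp
        have hp0 : (0:ℝ) < p := by linarith
        set W := weakMp μ (p+1) f with hWdef
        have step1 : ((μ Set.univ)⁻¹ * ∫⁻ x, (‖f x‖₊ : ℝ≥0∞) ^ p ∂μ) ^ (1/p) ≤
            2 * W := by
          calc ((μ Set.univ)⁻¹ * ∫⁻ x, (‖f x‖₊ : ℝ≥0∞) ^ p ∂μ) ^ (1/p)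
              ≤ ((1 + ENNReal.ofReal p) * W ^ p) ^ (1/p) :=
                ENNReal.rpow_le_rpow (hIle p hp) (by positivity)
            _ = (1 + ENNReal.ofReal p) ^ (1/p) * (W ^ p) ^ (1/p) :=
                ENNReal.mul_rpow_of_nonneg _ _ (by positivity)
            _ = (1 + ENNReal.ofReal p) ^ (1/p) * W := by
                rw [← ENNReal.rpow_mul, mul_one_div_cancel hp0.ne', ENNReal.rpow_one]
            _ ≤ 2 * W := by
                gcongr
                have h12 : 1 + ENNReal.ofReal p ≤ (2:ℝ≥0∞) ^ p := by
                  rw [← ENNReal.ofReal_one, ← ENNReal.ofReal_add zero_le_one hp0.le,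
                    show (2:ℝ≥0∞) = ENNReal.ofReal 2 by norm_num,
                    ENNReal.ofReal_rpow_of_pos two_pos]
                  refine ENNReal.ofReal_le_ofReal ?_
                  have := one_add_mul_self_le_rpow_one_add (by norm_num : (-1:ℝ) ≤ 1) hp
                  norm_num at this
                  linarith
                calc (1 + ENNReal.ofReal p) ^ (1/p) ≤ ((2:ℝ≥0∞) ^ p) ^ (1/p) :=
                      ENNReal.rpow_le_rpow h12 (by positivity)
                  _ = 2 := by
                      rw [← ENNReal.rpow_mul, mul_one_div_cancel hp0.ne', ENNReal.rpow_one]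
        have step2 : ENNReal.ofReal p ^ (-θ) ≤
            (2:ℝ≥0∞) ^ θ * ENNReal.ofReal (p+1) ^ (-θ) := by
          have hbase : ENNReal.ofReal (p+1) ^ θ ≤ (2:ℝ≥0∞) ^ θ * ENNReal.ofReal p ^ θ := by
            rw [← ENNReal.mul_rpow_of_nonneg _ _ hθ]
            refine ENNReal.rpow_le_rpow ?_ hθ
            rw [show (2:ℝ≥0∞) = ENNReal.ofReal 2 by norm_num,
              ← ENNReal.ofReal_mul (by norm_num)]
            exact ENNReal.ofReal_le_ofReal (by linarith)
          have h2θ0 : (2:ℝ≥0∞) ^ θ ≠ 0 := by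
            simp [ENNReal.rpow_eq_zero_iff]
          have h2θtop : (2:ℝ≥0∞) ^ θ ≠ ⊤ := by
            simp [ENNReal.rpow_eq_top_iff, hθ, not_lt.mpr hθ]
          rw [ENNReal.rpow_neg, ENNReal.rpow_neg]
          calc (ENNReal.ofReal p ^ θ)⁻¹
              = (2:ℝ≥0∞) ^ θ * (((2:ℝ≥0∞) ^ θ)⁻¹ * (ENNReal.ofReal p ^ θ)⁻¹) := by
                rw [← mul_assoc, ENNReal.mul_inv_cancel h2θ0 h2θtop, one_mul]
            _ = (2:ℝ≥0∞) ^ θ * ((2:ℝ≥0∞) ^ θ * ENNReal.ofReal p ^ θ)⁻¹ := by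
                rw [ENNReal.mul_inv (Or.inl h2θ0) (Or.inl h2θtop)]
            _ ≤ (2:ℝ≥0∞) ^ θ * (ENNReal.ofReal (p+1) ^ θ)⁻¹ := by
                gcongr
        calc ENNReal.ofReal p ^ (-θ) *
              ((μ Set.univ)⁻¹ * ∫⁻ x, (‖f x‖₊ : ℝ≥0∞) ^ p ∂μ) ^ (1/p)
            ≤ ((2:ℝ≥0∞) ^ θ * ENNReal.ofReal (p+1) ^ (-θ)) * (2 * W) :=
              mul_le_mul' step2 step1
          _ = (2:ℝ≥0∞) ^ θ * (2 * (ENNReal.ofReal (p+1) ^ (-θ) * W)) := by ring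
          _ ≤ (2:ℝ≥0∞) ^ θ * (2 * B) := by
              gcongr
              exact le_iSup₂ (f := fun (q:ℝ) (_ : 1 ≤ q) =>
                ENNReal.ofReal q ^ (-θ) * weakMp μ q f) (p+1) (by linarith)
      have hfin : (2:ℝ≥0∞) ^ θ * (2 * B) < ⊤ := by
        rw [lt_top_iff_ne_top]
        exact ENNReal.mul_ne_top (ENNReal.rpow_ne_top_of_nonneg hθ (by norm_num))
          (ENNReal.mul_ne_top (by norm_num) h2.ne)
      exact lt_of_le_of_lt (iSup₂_le hterm) hfin
end
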